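/- arXiv:2208.07237 — 4 statements merged into one kernel-verified Lean document; each statement's English description precedes it below -/
import Mathlib

section
/- For every real x > 0, the exponential integral satisfies E₁(x) = ∫_x^∞ e^{−t}/t dt < e^{−x} · ln(1 + 1/x). -/
open MeasureTheory Real Set Filter

/-- **Elementary upper bound for the exponential integral**
(Paper: elementary-function bracket for `E₁` used in the communication-power model).
For every `x > 0`, `E₁(x) = ∫_x^∞ e^{−t}/t dt < e^{−x} ln(1 + 1/x)`. -/
theorem expIntegral_lt_exp_mul_log (x : ℝ) (hx : 0 < x) :
    ∫ t in Set.Ioi x, Real.exp (-t) / t < Real.exp (-x) * Real.log (1 + 1 / x) := by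
  -- denominator function
  set D : ℝ → ℝ := fun t => 1 + x - Real.exp (x - t) with hD
  have hDpos : ∀ t, x ≤ t → x ≤ D t := by
    intro t ht
    have h1 : Real.exp (x - t) ≤ 1 := by
      rw [Real.exp_le_one_iff]
      linarith
    simp only [hD]; linarith
  -- antiderivative
  set g : ℝ → ℝ := fun t => Real.exp (-x) * Real.log (D t) with hg
  set g' : ℝ → ℝ := fun t => Real.exp (-t) / D t with hg'
  have hderiv : ∀ t ∈ Set.Ici x, HasDerivAt g (g' t) t := by
    intro t ht
    have hDt : x ≤ D t := hDpos t ht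
    have h1 : HasDerivAt (fun t : ℝ => x - t) (-1) t := by
      simpa using (hasDerivAt_id t).const_sub x
    have h2 : HasDerivAt D (Real.exp (x - t)) t := by
      have := ((Real.hasDerivAt_exp (x - t)).comp t h1).const_sub (1 + x)
      simpa [hD] using this.congr_deriv (by ring)
    have h3 : HasDerivAt (fun t => Real.log (D t)) (Real.exp (x - t) / D t) t :=
      h2.log (by linarith)
    have h4 := h3.const_mul (Real.exp (-x))
    convert h4 using 1
    show Real.exp (-t) / D t = _
    rw [← mul_div_assoc, ← Real.exp_add, show -x + (x - t) = -t by ring]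
    all_goals rfl
  -- limit of g at infinity
  have hlim : Tendsto g atTop (nhds (Real.exp (-x) * Real.log (1 + x))) := by
    have h1 : Tendsto (fun t : ℝ => x - t) atTop atBot := by
      simpa [sub_eq_add_neg] using tendsto_atBot_add_const_left atTop x
        (tendsto_neg_atTop_atBot)
    have h2 : Tendsto D atTop (nhds (1 + x)) := by
      have := Real.tendsto_exp_atBot.comp h1
      simpa [hD] using tendsto_const_nhds.sub this
    exact (Real.continuousAt_log (by linarith)).tendsto.comp h2 |>.const_mul _
  -- g' is nonneg on Ioi x
  have hg'nonneg : ∀ t ∈ Set.Ioi x, 0 ≤ g' t := by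
    intro t ht
    have := hDpos t (le_of_lt ht)
    exact div_nonneg (Real.exp_nonneg _) (by linarith)
  -- value of ∫ g'
  have hint : ∫ t in Set.Ioi x, g' t = Real.exp (-x) * Real.log (1 + 1 / x) := by
    rw [integral_Ioi_of_hasDerivAt_of_nonneg' hderiv hg'nonneg hlim]
    have hgx : g x = Real.exp (-x) * Real.log x := by
      show Real.exp (-x) * Real.log (1 + x - Real.exp (x - x)) = _
      rw [sub_self, Real.exp_zero]
      norm_num
    rw [hgx, ← mul_sub, ← Real.log_div (by linarith) (ne_of_gt hx)]
    congr 2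
    field_simp
    ring
  -- integrability of g'
  have hg'int : IntegrableOn g' (Set.Ioi x) :=
    integrableOn_Ioi_deriv_of_nonneg' hderiv hg'nonneg hlim
  -- integrability of f
  have hfm : Measurable fun t : ℝ => Real.exp (-t) / t := by
    exact (Real.measurable_exp.comp measurable_neg).div measurable_id
  have hfint : IntegrableOn (fun t => Real.exp (-t) / t) (Set.Ioi x) := by
    apply Integrable.mono (g := fun t => Real.exp (-t) / x)
    · exact (exp_neg_integrableOn_Ioi x one_pos).div_const x |>.congr
        (ae_of_all _ fun t => by simp [mul_comm]) |>.congr (ae_of_all _ fun t => rfl)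
    · exact hfm.aestronglyMeasurable.restrict
    · filter_upwards [ae_restrict_mem measurableSet_Ioi] with t ht
      have hxt : x < t := ht
      rw [Real.norm_eq_abs, Real.norm_eq_abs, abs_of_nonneg
        (div_nonneg (Real.exp_nonneg _) (le_of_lt (lt_trans hx hxt))),
        abs_of_nonneg (div_nonneg (Real.exp_nonneg _) hx.le)]
      exact div_le_div_of_nonneg_left (Real.exp_nonneg _) hx hxt.le
  -- pointwise strict inequality on Ioi x
  have hlt : ∀ t ∈ Set.Ioi x, Real.exp (-t) / t < g' t := by
    intro t ht
    have hxt : x < t := ht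
    have hDt : x ≤ D t := hDpos t hxt.le
    have hDlt : D t < t := by
      have : x - t + 1 < Real.exp (x - t) := by
        have := Real.add_one_lt_exp (x := x - t) (by linarith)
        linarith
      simp only [hD]; linarith
    exact div_lt_div_of_pos_left (Real.exp_pos _) (by linarith) hDlt
  -- conclude: ∫ (g' - f) > 0
  have hdiff : 0 < ∫ t in Set.Ioi x, (g' t - Real.exp (-t) / t) := by
    rw [setIntegral_pos_iff_support_of_nonneg_ae]
    · have hsub : Set.Ioi x ⊆ Function.support (fun t => g' t - Real.exp (-t) / t) ∩ Set.Ioi x := by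
        intro t ht
        refine ⟨?_, ht⟩
        simp only [Function.mem_support]
        exact (sub_pos.mpr (hlt t ht)).ne'
      calc (0 : ENNReal) < ⊤ := by simp
        _ = volume (Set.Ioi x) := (Real.volume_Ioi).symm
        _ ≤ _ := measure_mono hsub
    · filter_upwards [ae_restrict_mem measurableSet_Ioi] with t ht
      simp only [Pi.zero_apply]
      linarith [hlt t ht]
    · exact hg'int.sub hfint
  have := integral_sub hg'int hfint
  rw [this] at hdiff
  linarith [hint ▸ hdiff]
end

section
/- For every λ > 0, ϱ > 0, and p ∈ (0,1), the average transmission power is bounded as p · ϱ · ∫_{−(1/λ) ln p}^∞ (λ/x) e^{−λ x} dx < ϱ λ p² · ln(1 − 1/ln p). -/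
open MeasureTheory Real Filter Set Topology ENNReal

/-- **Closed-form upper bound on the average transmission power**
(Paper: closed-form upper approximation of `P^comm` via the bound
`E₁(x) < e^{−x} ln(1 + 1/x)`). For `λ > 0`, `ϱ > 0`, and `p ∈ (0,1)`, with
channel-gain threshold `g_th = −(1/λ) ln p`,
`p ϱ ∫_{g_th}^∞ (λ/x) e^{−λx} dx < ϱ λ p² ln(1 − 1/ln p)`. -/
theorem average_power_lt_closed_form
    (lam ϱ p : ℝ) (hlam : 0 < lam) (hϱ : 0 < ϱ) (hp : p ∈ Set.Ioo (0 : ℝ) 1) :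
    p * ϱ * ∫ x in Set.Ioi (-(1 / lam) * Real.log p),
        (lam / x) * Real.exp (-(lam * x))
      < ϱ * lam * p ^ 2 * Real.log (1 - 1 / Real.log p) := by
  obtain ⟨hp0, hp1⟩ := hp
  have hlp : Real.log p < 0 := Real.log_neg hp0 hp1
  set a : ℝ := -(1 / lam) * Real.log p with ha_def
  have ha : 0 < a := by
    rw [ha_def]
    have : 0 < 1 / lam := by positivity
    nlinarith
  -- abbreviations
  set E : ℝ → ℝ := fun x => Real.exp (-(lam * x)) with hE_def
  set L : ℝ → ℝ := fun x => Real.log (lam * x + 1) - Real.log (lam * x) with hL_def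
  set g : ℝ → ℝ := fun x => (lam / x) * Real.exp (-(lam * x)) with hg_def
  set F : ℝ → ℝ := fun x => -(lam * (E x * L x)) with hF_def
  set φ : ℝ → ℝ := fun x =>
    -(lam * ((E x * -lam) * L x + E x * (lam / (lam * x + 1) - lam / (lam * x)))) with hφ_def
  -- derivative of F is φ on Ici a
  have hderiv : ∀ x ∈ Set.Ici a, HasDerivAt F (φ x) x := by
    intro x hx
    have hxpos : 0 < x := lt_of_lt_of_le ha hx
    have hlx : 0 < lam * x := by positivity
    have hlx1 : 0 < lam * x + 1 := by linarith
    have h1 : HasDerivAt (fun x : ℝ => lam * x) lam x := by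
      simpa using (hasDerivAt_id x).const_mul lam
    have hE' : HasDerivAt E (E x * -lam) x := by
      simpa [hE_def] using (h1.neg).exp
    have hL1 : HasDerivAt (fun x : ℝ => Real.log (lam * x + 1)) (lam / (lam * x + 1)) x := by
      simpa using ((h1.add_const 1).log hlx1.ne')
    have hL2 : HasDerivAt (fun x : ℝ => Real.log (lam * x)) (lam / (lam * x)) x :=
      h1.log hlx.ne'
    have hL' : HasDerivAt L (lam / (lam * x + 1) - lam / (lam * x)) x := hL1.sub hL2
    simpa [hF_def, hφ_def, Pi.neg_def] using ((hE'.mul hL').const_mul lam).neg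
  -- pointwise facts on Ioi a
  have key : ∀ x ∈ Set.Ioi a, 1 / (lam * x + 1) < L x := by
    intro x hx
    have hxpos : 0 < x := lt_trans ha hx
    have hlx : 0 < lam * x := by positivity
    have hlx1 : 0 < lam * x + 1 := by linarith
    have hzpos : 0 < (lam * x) / (lam * x + 1) := by positivity
    have hzne : (lam * x) / (lam * x + 1) ≠ 1 := by
      intro h
      have := (div_eq_one_iff_eq hlx1.ne').mp h
      linarith
    have hz := Real.log_lt_sub_one_of_pos hzpos hzne
    rw [Real.log_div hlx.ne' hlx1.ne'] at hz
    have hrw : (lam * x) / (lam * x + 1) - 1 = -(1 / (lam * x + 1)) := by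
      field_simp
      ring
    rw [hrw] at hz
    simp only [hL_def]
    linarith
  have hφnonneg : ∀ x ∈ Set.Ioi a, 0 ≤ φ x := by
    intro x hx
    have hxpos : 0 < x := lt_trans ha hx
    have hlx : 0 < lam * x := by positivity
    have hlx1 : 0 < lam * x + 1 := by linarith
    have hLpos : 0 < L x := lt_trans (by positivity) (key x hx)
    have hEpos : 0 < E x := Real.exp_pos _
    have hd : 0 < lam / (lam * x) - lam / (lam * x + 1) := by
      rw [div_sub_div _ _ hlx.ne' hlx1.ne']
      apply div_pos (by nlinarith) (by positivity)
    have : φ x = lam * (E x * (lam * L x)) + lam * (E x * (lam / (lam * x) - lam / (lam * x + 1))) := by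
      simp only [hφ_def]; ring
    rw [this]
    have h1 : 0 ≤ lam * (E x * (lam * L x)) := by positivity
    have h2 : 0 ≤ lam * (E x * (lam / (lam * x) - lam / (lam * x + 1))) :=
      mul_nonneg hlam.le (mul_nonneg hEpos.le hd.le)
    linarith
  have hgap : ∀ x ∈ Set.Ioi a, g x < φ x := by
    intro x hx
    have hxpos : 0 < x := lt_trans ha hx
    have hlx : 0 < lam * x := by positivity
    have hlx1 : 0 < lam * x + 1 := by linarith
    have hEpos : 0 < E x := Real.exp_pos _
    have hk := key x hx
    have hφg : φ x - g x = lam ^ 2 * E x * (L x - 1 / (lam * x + 1)) := by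
      simp only [hφ_def, hg_def, hE_def]
      field_simp
      ring
    have h2 : 0 < lam ^ 2 * E x * (L x - 1 / (lam * x + 1)) :=
      mul_pos (mul_pos (pow_pos hlam 2) hEpos) (sub_pos.mpr hk)
    rw [← hφg] at h2
    linarith
  -- limits at infinity
  have hlamtop : Tendsto (fun x : ℝ => lam * x) atTop atTop :=
    Tendsto.const_mul_atTop hlam tendsto_id
  have hE0 : Tendsto E atTop (𝓝 0) :=
    Real.tendsto_exp_atBot.comp ((tendsto_neg_atTop_atBot).comp hlamtop)
  have hL0 : Tendsto L atTop (𝓝 0) := by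
    have h1 : Tendsto (fun x : ℝ => 1 + (lam * x)⁻¹) atTop (𝓝 (1 + 0)) :=
      tendsto_const_nhds.add (tendsto_inv_atTop_zero.comp hlamtop)
    rw [add_zero] at h1
    have h2 : Tendsto (fun x : ℝ => Real.log (1 + (lam * x)⁻¹)) atTop (𝓝 0) := by
      have := ((Real.continuousAt_log one_ne_zero).tendsto).comp h1
      simpa [Function.comp_def] using this
    apply h2.congr'
    filter_upwards [eventually_gt_atTop 0] with x hx
    have hlx : 0 < lam * x := by positivity
    have hlx1 : 0 < lam * x + 1 := by linarith
    simp only [hL_def]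
    rw [← Real.log_div hlx1.ne' hlx.ne']
    congr 1
    field_simp
  have hF0 : Tendsto F atTop (𝓝 0) := by
    have := ((hE0.mul hL0).const_mul lam).neg
    simpa [hF_def] using this
  -- FTC on (a, ∞)
  have hIntφ : IntegrableOn φ (Set.Ioi a) :=
    integrableOn_Ioi_deriv_of_nonneg' hderiv hφnonneg hF0
  have hIeq : ∫ x in Set.Ioi a, φ x = 0 - F a :=
    integral_Ioi_of_hasDerivAt_of_nonneg' hderiv hφnonneg hF0
  -- integrability of g
  have hgcont : ContinuousOn g (Set.Ioi a) := by
    apply ContinuousOn.mul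
    · exact continuousOn_const.div continuousOn_id fun x hx => (lt_trans ha hx).ne'
    · exact (Real.continuous_exp.comp (continuous_const.mul continuous_id).neg).continuousOn
  have hgmeas : AEStronglyMeasurable g (volume.restrict (Set.Ioi a)) :=
    hgcont.aestronglyMeasurable measurableSet_Ioi
  have hgInt : IntegrableOn g (Set.Ioi a) := by
    apply Integrable.mono' hIntφ hgmeas
    filter_upwards [ae_restrict_mem measurableSet_Ioi] with x hx
    have hxpos : 0 < x := lt_trans ha hx
    have hgpos : 0 ≤ g x := by
      simp only [hg_def]
      positivity
    rw [Real.norm_eq_abs, abs_of_nonneg hgpos]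
    exact (hgap x hx).le
  -- strict inequality of integrals
  have hstrict : (∫ x in Set.Ioi a, g x) < ∫ x in Set.Ioi a, φ x := by
    have hpos : 0 < ∫ x in Set.Ioi a, (φ x - g x) := by
      rw [integral_pos_iff_support_of_nonneg_ae]
      · have hsub : Set.Ioi a ⊆ Function.support (fun x => φ x - g x) := by
          intro x hx h
          exact absurd (sub_eq_zero.mp h) (ne_of_gt (hgap x hx))
        calc (0 : ENNReal) < (volume.restrict (Set.Ioi a)) (Set.Ioi a) := by
              rw [Measure.restrict_apply_self, Real.volume_Ioi]
              exact ENNReal.zero_lt_top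
          _ ≤ _ := measure_mono hsub
      · filter_upwards [ae_restrict_mem measurableSet_Ioi] with x hx
        exact sub_nonneg.mpr (hgap x hx).le
      · exact hIntφ.sub hgInt
    rw [integral_sub hIntφ hgInt] at hpos
    linarith
  -- evaluate F a
  have hla : lam * a = -Real.log p := by
    rw [ha_def]; field_simp
  have hEa : E a = p := by
    simp only [hE_def]
    rw [hla, neg_neg, Real.exp_log hp0]
  have hLa : L a = Real.log (1 - 1 / Real.log p) := by
    simp only [hL_def]
    rw [hla]
    have h1 : 0 < -Real.log p := by linarith
    have h2 : 0 < -Real.log p + 1 := by linarith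
    rw [← Real.log_div h2.ne' h1.ne']
    congr 1
    field_simp [hlp.ne]
    ring
  have hFa : 0 - F a = lam * p * Real.log (1 - 1 / Real.log p) := by
    simp only [hF_def, hEa, hLa]
    ring
  rw [hIeq, hFa] at hstrict
  calc p * ϱ * ∫ x in Set.Ioi a, (lam / x) * Real.exp (-(lam * x))
      = p * ϱ * ∫ x in Set.Ioi a, g x := by rfl
    _ < p * ϱ * (lam * p * Real.log (1 - 1 / Real.log p)) := by
        apply mul_lt_mul_of_pos_left hstrict (by positivity)
    _ = ϱ * lam * p ^ 2 * Real.log (1 - 1 / Real.log p) := by ring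
end

section
/- For all constants A ≥ 0, B ≥ 0, C ≥ 0 and q ≥ 0, the function Θ₁(p, H) = A (p + q)/(p H) + B √(p + q)/√(p H) + C is convex on the set {(p, H) ∈ ℝ² : p > 0 and H > 0}. -/
open Real

section Aux

variable {S : Set (ℝ × ℝ)}

/-- Transfer convexity along a pointwise equality on the set. -/
lemma convexOn_congr_aux {f g : ℝ × ℝ → ℝ} (hf : ConvexOn ℝ S f)
    (h : ∀ x ∈ S, f x = g x) : ConvexOn ℝ S g :=
  ⟨hf.1, fun x hx y hy a b ha hb hab => by
    rw [← h _ (hf.1 hx hy ha hb hab), ← h _ hx, ← h _ hy]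
    exact hf.2 hx hy ha hb hab⟩

/-- `exp` of a convex function is convex. -/
lemma convexOn_exp_comp_aux {u : ℝ × ℝ → ℝ} (hu : ConvexOn ℝ S u) :
    ConvexOn ℝ S (fun x => Real.exp (u x)) := by
  refine ⟨hu.1, fun x hx y hy a b ha hb hab => ?_⟩
  calc Real.exp (u (a • x + b • y)) ≤ Real.exp (a * u x + b * u y) := by
        exact Real.exp_le_exp.2 (by simpa using hu.2 hx hy ha hb hab)
    _ ≤ a * Real.exp (u x) + b * Real.exp (u y) := by
        simpa using convexOn_exp.2 (Set.mem_univ (u x)) (Set.mem_univ (u y)) ha hb hab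

/-- Minkowski inequality in the plane. -/
lemma sqrt_minkowski_aux (a b c d : ℝ) :
    Real.sqrt ((a + c) ^ 2 + (b + d) ^ 2) ≤
      Real.sqrt (a ^ 2 + b ^ 2) + Real.sqrt (c ^ 2 + d ^ 2) := by
  have h1 : a * c + b * d ≤ Real.sqrt (a ^ 2 + b ^ 2) * Real.sqrt (c ^ 2 + d ^ 2) := by
    rw [← Real.sqrt_mul (by positivity)]
    rcases le_or_gt (a * c + b * d) 0 with h | h
    · exact h.trans (Real.sqrt_nonneg _)
    · rw [show (a * c + b * d) = Real.sqrt ((a * c + b * d) ^ 2) from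
        (Real.sqrt_sq h.le).symm]
      exact Real.sqrt_le_sqrt (by nlinarith [sq_nonneg (a * d - b * c)])
  have h2 : (a + c) ^ 2 + (b + d) ^ 2 ≤
      (Real.sqrt (a ^ 2 + b ^ 2) + Real.sqrt (c ^ 2 + d ^ 2)) ^ 2 := by
    have e1 : Real.sqrt (a ^ 2 + b ^ 2) ^ 2 = a ^ 2 + b ^ 2 := Real.sq_sqrt (by positivity)
    have e2 : Real.sqrt (c ^ 2 + d ^ 2) ^ 2 = c ^ 2 + d ^ 2 := Real.sq_sqrt (by positivity)
    nlinarith [h1]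
  calc Real.sqrt ((a + c) ^ 2 + (b + d) ^ 2)
      ≤ Real.sqrt ((Real.sqrt (a ^ 2 + b ^ 2) + Real.sqrt (c ^ 2 + d ^ 2)) ^ 2) :=
        Real.sqrt_le_sqrt h2
    _ = _ := Real.sqrt_sq (by positivity)

/-- If `f, g` are convex and nonnegative on `S`, then `√(f² + g²)` is convex on `S`. -/
lemma convexOn_sqrt_sq_add_sq_aux {f g : ℝ × ℝ → ℝ} (hf : ConvexOn ℝ S f)
    (hg : ConvexOn ℝ S g) (hf0 : ∀ x ∈ S, 0 ≤ f x) (hg0 : ∀ x ∈ S, 0 ≤ g x) :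
    ConvexOn ℝ S (fun x => Real.sqrt (f x ^ 2 + g x ^ 2)) := by
  refine ⟨hf.1, fun x hx y hy a b ha hb hab => ?_⟩
  have hz : a • x + b • y ∈ S := hf.1 hx hy ha hb hab
  have step1 : Real.sqrt (f (a • x + b • y) ^ 2 + g (a • x + b • y) ^ 2) ≤
      Real.sqrt ((a * f x + b * f y) ^ 2 + (a * g x + b * g y) ^ 2) := by
    apply Real.sqrt_le_sqrt
    have h1 : f (a • x + b • y) ≤ a * f x + b * f y := by
      simpa using hf.2 hx hy ha hb hab
    have h2 : g (a • x + b • y) ≤ a * g x + b * g y := by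
      simpa using hg.2 hx hy ha hb hab
    exact add_le_add (pow_le_pow_left₀ (hf0 _ hz) h1 2) (pow_le_pow_left₀ (hg0 _ hz) h2 2)
  have step2 : Real.sqrt ((a * f x + b * f y) ^ 2 + (a * g x + b * g y) ^ 2) ≤
      a * Real.sqrt (f x ^ 2 + g x ^ 2) + b * Real.sqrt (f y ^ 2 + g y ^ 2) := by
    have := sqrt_minkowski_aux (a * f x) (a * g x) (b * f y) (b * g y)
    have ea : Real.sqrt ((a * f x) ^ 2 + (a * g x) ^ 2)
        = a * Real.sqrt (f x ^ 2 + g x ^ 2) := by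
      rw [mul_pow, mul_pow, ← mul_add, Real.sqrt_mul (sq_nonneg a), Real.sqrt_sq ha]
    have eb : Real.sqrt ((b * f y) ^ 2 + (b * g y) ^ 2)
        = b * Real.sqrt (f y ^ 2 + g y ^ 2) := by
      rw [mul_pow, mul_pow, ← mul_add, Real.sqrt_mul (sq_nonneg b), Real.sqrt_sq hb]
    rw [ea, eb] at this
    exact this
  simpa using step1.trans step2

end Aux

/-- Convexity of the monomial `exp (c log p + d log H)` on the positive quadrant,
for nonpositive exponents `c, d`. -/
lemma convexOn_monomial_aux (c d : ℝ) (hc : c ≤ 0) (hd : d ≤ 0) :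
    ConvexOn ℝ {x : ℝ × ℝ | 0 < x.1 ∧ 0 < x.2}
      (fun x => Real.exp (c * Real.log x.1 + d * Real.log x.2)) := by
  set S := {x : ℝ × ℝ | 0 < x.1 ∧ 0 < x.2} with hSdef
  have hS : Convex ℝ S := by
    have : S = Set.Ioi (0 : ℝ) ×ˢ Set.Ioi (0 : ℝ) := by
      ext x; simp [hSdef, Set.mem_prod]
    rw [this]
    exact (convex_Ioi 0).prod (convex_Ioi 0)
  have hlog1 : ConcaveOn ℝ S (fun x : ℝ × ℝ => Real.log x.1) :=
    ⟨hS, fun x hx y hy a b ha hb hab => by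
      simpa using strictConcaveOn_log_Ioi.concaveOn.2 hx.1 hy.1 ha hb hab⟩
  have hlog2 : ConcaveOn ℝ S (fun x : ℝ × ℝ => Real.log x.2) :=
    ⟨hS, fun x hx y hy a b ha hb hab => by
      simpa using strictConcaveOn_log_Ioi.concaveOn.2 hx.2 hy.2 ha hb hab⟩
  have h1 : ConvexOn ℝ S (fun x : ℝ × ℝ => c * Real.log x.1) := by
    have := hlog1.neg.smul (c := -c) (by linarith)
    refine convexOn_congr_aux this fun x _ => by simp [smul_eq_mul]
  have h2 : ConvexOn ℝ S (fun x : ℝ × ℝ => d * Real.log x.2) := by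
    have := hlog2.neg.smul (c := -d) (by linarith)
    refine convexOn_congr_aux this fun x _ => by simp [smul_eq_mul]
  exact convexOn_exp_comp_aux (h1.add h2)

/-- **Convexity of the communication-round count `Θ₁`** (Paper: convexity claim for
`Θ₁` in the JCP control problem, proved in Appendix B via its Hessian). For
nonnegative constants `A, B, C, q`, the function
`Θ₁(p, H) = A (p+q)/(pH) + B √(p+q)/√(pH) + C` is convex on
`{(p, H) : p > 0, H > 0}`. -/
theorem theta1_convexOn (A B C q : ℝ) (hA : 0 ≤ A) (hB : 0 ≤ B) (hC : 0 ≤ C)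
    (hq : 0 ≤ q) :
    ConvexOn ℝ {x : ℝ × ℝ | 0 < x.1 ∧ 0 < x.2}
      (fun x => A * (x.1 + q) / (x.1 * x.2)
        + B * Real.sqrt (x.1 + q) / Real.sqrt (x.1 * x.2) + C) := by
  set S := {x : ℝ × ℝ | 0 < x.1 ∧ 0 < x.2} with hSdef
  -- monomial pieces
  have e01 := convexOn_monomial_aux 0 (-1) le_rfl (by norm_num)
  have e11 := convexOn_monomial_aux (-1) (-1) (by norm_num) (by norm_num)
  have h01 := convexOn_monomial_aux 0 (-1/2) le_rfl (by norm_num)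
  have h11 := convexOn_monomial_aux (-1/2) (-1/2) (by norm_num) (by norm_num)
  have hS : Convex ℝ S := e01.1
  -- the sqrt piece : √(h01² + (√q · h11)²) is convex
  have hg2 : ConvexOn ℝ S (fun x => Real.sqrt q *
      Real.exp ((-1/2) * Real.log x.1 + (-1/2) * Real.log x.2)) := by
    have := h11.smul (c := Real.sqrt q) (Real.sqrt_nonneg q)
    simpa [smul_eq_mul] using this
  have hsqrt : ConvexOn ℝ S (fun x =>
      Real.sqrt ((Real.exp (0 * Real.log x.1 + (-1/2) * Real.log x.2)) ^ 2 +
        (Real.sqrt q * Real.exp ((-1/2) * Real.log x.1 + (-1/2) * Real.log x.2)) ^ 2)) :=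
    convexOn_sqrt_sq_add_sq_aux h01 hg2
      (fun x _ => (Real.exp_pos _).le)
      (fun x _ => mul_nonneg (Real.sqrt_nonneg q) (Real.exp_pos _).le)
  -- assemble the convex model function
  have hG : ConvexOn ℝ S (fun x =>
      A * Real.exp (0 * Real.log x.1 + (-1) * Real.log x.2)
      + A * q * Real.exp ((-1) * Real.log x.1 + (-1) * Real.log x.2)
      + B * Real.sqrt ((Real.exp (0 * Real.log x.1 + (-1/2) * Real.log x.2)) ^ 2 +
          (Real.sqrt q * Real.exp ((-1/2) * Real.log x.1 + (-1/2) * Real.log x.2)) ^ 2)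
      + C) := by
    have t1 := e01.smul (c := A) hA
    have t2 := e11.smul (c := A * q) (mul_nonneg hA hq)
    have t3 := hsqrt.smul (c := B) hB
    have t4 : ConvexOn ℝ S (fun _ => C) := convexOn_const C hS
    simpa [smul_eq_mul, Pi.add_def] using ((t1.add t2).add t3).add t4
  -- identify the model with Θ₁ on S
  refine convexOn_congr_aux hG fun x hx => ?_
  obtain ⟨hp, hH⟩ := hx
  have hp' : x.1 ≠ 0 := ne_of_gt hp
  have hH' : x.2 ≠ 0 := ne_of_gt hH
  have elog1 : Real.exp (Real.log x.1) = x.1 := Real.exp_log hp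
  have elog2 : Real.exp (Real.log x.2) = x.2 := Real.exp_log hH
  -- value of each exponential piece
  have v1 : Real.exp (0 * Real.log x.1 + (-1) * Real.log x.2) = 1 / x.2 := by
    rw [show (0 : ℝ) * Real.log x.1 + (-1) * Real.log x.2 = -Real.log x.2 by ring,
      Real.exp_neg, elog2, one_div]
  have v2 : Real.exp ((-1) * Real.log x.1 + (-1) * Real.log x.2) = 1 / (x.1 * x.2) := by
    rw [show (-1 : ℝ) * Real.log x.1 + (-1) * Real.log x.2
        = -(Real.log x.1 + Real.log x.2) by ring,
      Real.exp_neg, Real.exp_add, elog1, elog2, one_div]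
  have v3 : (Real.exp (0 * Real.log x.1 + (-1/2) * Real.log x.2)) ^ 2 = 1 / x.2 := by
    rw [sq, ← Real.exp_add,
      show (0 * Real.log x.1 + -1/2 * Real.log x.2) + (0 * Real.log x.1 + -1/2 * Real.log x.2)
        = -Real.log x.2 by ring, Real.exp_neg, elog2, one_div]
  have v4 : (Real.sqrt q * Real.exp ((-1/2) * Real.log x.1 + (-1/2) * Real.log x.2)) ^ 2
      = q / (x.1 * x.2) := by
    rw [mul_pow, Real.sq_sqrt hq, sq, ← Real.exp_add,
      show (-1/2 * Real.log x.1 + -1/2 * Real.log x.2)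
          + (-1/2 * Real.log x.1 + -1/2 * Real.log x.2)
        = -(Real.log x.1 + Real.log x.2) by ring,
      Real.exp_neg, Real.exp_add, elog1, elog2]
    rw [div_eq_mul_inv]
  have vsum : (1 : ℝ) / x.2 + q / (x.1 * x.2) = (x.1 + q) / (x.1 * x.2) := by
    field_simp
  have vsqrt : Real.sqrt ((x.1 + q) / (x.1 * x.2))
      = Real.sqrt (x.1 + q) / Real.sqrt (x.1 * x.2) :=
    Real.sqrt_div (by positivity) _
  rw [v1, v2, v3, v4, vsum, vsqrt]
  rw [mul_div_assoc, mul_div_assoc]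
  field_simp
end

section
/- For all constants c ≥ 0 and E₀ ≥ 0, the function Θ₂(p, H) = c · p² · ln(1 − 1/ln p) + E₀ · H is convex on the set {(p, H) ∈ ℝ² : 0 < p < 1}. -/
open Real Set

noncomputable def F (p : ℝ) : ℝ := p ^ 2 * Real.log (1 - 1 / Real.log p)
noncomputable def F' (p : ℝ) : ℝ :=
  2 * p * Real.log (1 - 1 / Real.log p) + p / (Real.log p * (Real.log p - 1))
noncomputable def F'' (p : ℝ) : ℝ :=
  2 * Real.log (1 - 1 / Real.log p) + 3 / (Real.log p * (Real.log p - 1))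
    - (2 * Real.log p - 1) / ((Real.log p) ^ 2 * (Real.log p - 1) ^ 2)

lemma log_facts {p : ℝ} (hp : p ∈ Ioo (0:ℝ) 1) :
    Real.log p < 0 ∧ Real.log p ≠ 0 ∧ Real.log p - 1 ≠ 0 ∧ (0:ℝ) < 1 - 1 / Real.log p := by
  have hL : Real.log p < 0 := Real.log_neg hp.1 hp.2
  refine ⟨hL, ne_of_lt hL, by linarith, ?_⟩
  have : 0 < -1 / Real.log p := div_pos_of_neg_of_neg (by norm_num) hL
  rw [neg_div] at this
  have h1 : 1 / Real.log p < 0 := by linarith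
  linarith

lemma hasDerivAt_log_term {p : ℝ} (hp : p ∈ Ioo (0:ℝ) 1) :
    HasDerivAt (fun q => Real.log (1 - 1 / Real.log q))
      ((p⁻¹ / (Real.log p) ^ 2) / (1 - 1 / Real.log p)) p := by
  obtain ⟨hL, hLne, hL1, hpos⟩ := log_facts hp
  have h1 : HasDerivAt Real.log p⁻¹ p := Real.hasDerivAt_log (ne_of_gt hp.1)
  have h2 : HasDerivAt (fun q => (Real.log q)⁻¹) (-(p⁻¹) / (Real.log p) ^ 2) p :=
    h1.inv hLne
  have h3 : HasDerivAt (fun q => 1 - 1 / Real.log q) (p⁻¹ / (Real.log p) ^ 2) p := by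
    have := h2.const_sub 1
    simpa [one_div, neg_div] using this
  exact h3.log (ne_of_gt hpos)

lemma hasDerivAt_F {p : ℝ} (hp : p ∈ Ioo (0:ℝ) 1) : HasDerivAt F (F' p) p := by
  obtain ⟨hL, hLne, hL1, hpos⟩ := log_facts hp
  have hp0 : p ≠ 0 := ne_of_gt hp.1
  have h4 := hasDerivAt_log_term hp
  have h5 : HasDerivAt (fun q : ℝ => q ^ 2) (2 * p) p := by
    simpa using hasDerivAt_pow 2 p
  have h6 := h5.mul h4
  refine h6.congr_deriv ?_
  unfold F'
  have hne : 1 - 1 / Real.log p ≠ 0 := ne_of_gt hpos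
  field_simp

lemma hasDerivAt_F' {p : ℝ} (hp : p ∈ Ioo (0:ℝ) 1) : HasDerivAt F' (F'' p) p := by
  obtain ⟨hL, hLne, hL1, hpos⟩ := log_facts hp
  have hp0 : p ≠ 0 := ne_of_gt hp.1
  have hQ : Real.log p * (Real.log p - 1) ≠ 0 := mul_ne_zero hLne hL1
  have hlog := hasDerivAt_log_term hp
  have hid : HasDerivAt (fun q : ℝ => q) 1 p := hasDerivAt_id p
  have hA : HasDerivAt (fun q => 2 * q * Real.log (1 - 1 / Real.log q))
      (2 * 1 * Real.log (1 - 1 / Real.log p)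
        + 2 * p * ((p⁻¹ / (Real.log p) ^ 2) / (1 - 1 / Real.log p))) p := by
    have := ((hid.const_mul 2).mul hlog)
    exact this.congr_deriv (by ring)
  have hQd : HasDerivAt (fun q => Real.log q * (Real.log q - 1))
      (p⁻¹ * (Real.log p - 1) + Real.log p * p⁻¹) p := by
    have h1 : HasDerivAt Real.log p⁻¹ p := Real.hasDerivAt_log hp0
    exact h1.mul (h1.sub_const 1)
  have hB : HasDerivAt (fun q => q / (Real.log q * (Real.log q - 1)))
      ((1 * (Real.log p * (Real.log p - 1)) - p * (p⁻¹ * (Real.log p - 1) + Real.log p * p⁻¹))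
        / (Real.log p * (Real.log p - 1)) ^ 2) p := hid.div hQd hQ
  have := hA.add hB
  refine this.congr_deriv ?_
  unfold F''
  have hne : 1 - 1 / Real.log p ≠ 0 := ne_of_gt hpos
  field_simp
  ring

lemma F''_nonneg {p : ℝ} (hp : p ∈ Ioo (0:ℝ) 1) : 0 ≤ F'' p := by
  obtain ⟨hL, hLne, hL1, hpos⟩ := log_facts hp
  set u := Real.log p with hu
  have hQpos : 0 < u * (u - 1) := mul_pos_of_neg_of_neg hL (by linarith)
  have hlog : 0 ≤ Real.log (1 - 1 / u) := Real.log_nonneg (by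
    have : 0 < -1 / u := div_pos_of_neg_of_neg (by norm_num) hL
    rw [neg_div] at this
    have h1 : 1 / u < 0 := by linarith
    linarith)
  have h3 : 0 < 3 / (u * (u - 1)) := by positivity
  have hden : 0 < u ^ 2 * (u - 1) ^ 2 := by positivity
  have hnum : 2 * u - 1 < 0 := by linarith
  have h4 : (2 * u - 1) / (u ^ 2 * (u - 1) ^ 2) < 0 := div_neg_of_neg_of_pos hnum hden
  unfold F''
  rw [← hu]
  linarith

lemma F_convex : ConvexOn ℝ (Ioo (0:ℝ) 1) F := by
  have hint : interior (Ioo (0:ℝ) 1) = Ioo 0 1 := (isOpen_Ioo).interior_eq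
  refine convexOn_of_hasDerivWithinAt2_nonneg (f' := F') (f'' := F'') (convex_Ioo 0 1) ?_ ?_ ?_ ?_
  · intro x hx
    exact ((hasDerivAt_F hx).continuousAt).continuousWithinAt
  · intro x hx; rw [hint] at hx
    exact ((hasDerivAt_F hx).hasDerivWithinAt)
  · intro x hx; rw [hint] at hx
    exact ((hasDerivAt_F' hx).hasDerivWithinAt)
  · intro x hx; rw [hint] at hx; exact F''_nonneg hx

/-- **Convexity of the per-round energy `Θ₂`** (Paper: convexity claim for `Θ₂` in the
JCP control problem, proved in Appendix B via its Hessian). For nonnegative constants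
`c` (communication-energy factor) and `E₀` (per-iteration computation energy), the
function `Θ₂(p, H) = c p² ln(1 − 1/ln p) + E₀ H` is convex on
`{(p, H) : 0 < p < 1}`. -/
theorem theta2_convexOn (c E0 : ℝ) (hc : 0 ≤ c) (hE0 : 0 ≤ E0) :
    ConvexOn ℝ {x : ℝ × ℝ | 0 < x.1 ∧ x.1 < 1}
      (fun x => c * x.1 ^ 2 * Real.log (1 - 1 / Real.log x.1) + E0 * x.2) := by
  have hF := (F_convex.smul hc)
  have hS : Convex ℝ {x : ℝ × ℝ | 0 < x.1 ∧ x.1 < 1} := by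
    have : {x : ℝ × ℝ | 0 < x.1 ∧ x.1 < 1} = (Prod.fst ⁻¹' Ioo (0:ℝ) 1) := by
      ext x; simp [Set.mem_Ioo]
    rw [this]
    exact (convex_Ioo (0:ℝ) 1).linear_preimage (LinearMap.fst ℝ ℝ ℝ)
  refine ⟨hS, ?_⟩
  intro x hx y hy a b ha hb hab
  have hx1 : x.1 ∈ Ioo (0:ℝ) 1 := hx
  have hy1 : y.1 ∈ Ioo (0:ℝ) 1 := hy
  have key := hF.2 hx1 hy1 ha hb hab
  simp only [smul_eq_mul, Pi.smul_apply] at key ⊢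
  have hfst : (a • x + b • y).1 = a * x.1 + b * y.1 := rfl
  have hsnd : (a • x + b • y).2 = a * x.2 + b * y.2 := rfl
  rw [hfst, hsnd]
  unfold F at key
  calc c * (a * x.1 + b * y.1) ^ 2 * Real.log (1 - 1 / Real.log (a * x.1 + b * y.1))
        + E0 * (a * x.2 + b * y.2)
      = c * ((a * x.1 + b * y.1) ^ 2 * Real.log (1 - 1 / Real.log (a * x.1 + b * y.1)))
        + E0 * (a * x.2 + b * y.2) := by ring
    _ ≤ (a * (c * (x.1 ^ 2 * Real.log (1 - 1 / Real.log x.1)))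
        + b * (c * (y.1 ^ 2 * Real.log (1 - 1 / Real.log y.1))))
        + E0 * (a * x.2 + b * y.2) := by
          exact add_le_add_left key _
    _ = a * (c * x.1 ^ 2 * Real.log (1 - 1 / Real.log x.1) + E0 * x.2)
        + b * (c * y.1 ^ 2 * Real.log (1 - 1 / Real.log y.1) + E0 * y.2) := by ring
end
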